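/- (Discrete trace theorem for graphs between G_{k,ℓ} and G*_{k,ℓ}.) Assume ℓ ≥ 2, and let H be any graph with G_{k,ℓ} ⊆ H ⊆ G*_{k,ℓ}, i.e., the H-energy is |u|_H² = |u|_G² plus the sum of (u(i,j+1) − u(i−1,j))² and/or (u(i,j+1) − u(i+1,j))² over any fixed subset of the diagonal edges of G*_{k,ℓ}. Then for every φ : ℤ/kℤ → ℝ: (i) every u with u(i,1) = φ(i) for all i satisfies |φ|_Γ² ≤ max{3c, 4π²} · |u|_H²; and (ii) there exists u with u(i,1) = φ(i) for all i and |u|_H² ≤ (4c + 475/9) · |φ|_Γ². -/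

import Mathlib

open Real Finset

noncomputable section

/-- The cycle distance on `ℤ/kℤ`. -/
def cycDist (k : ℕ) (p q : ZMod k) : ℕ := min (p - q).val (q - p).val

def bSemiSq (k : ℕ) [NeZero k] (φ : ZMod k → ℝ) : ℝ :=
  (1 / 2) * ∑ p : ZMod k, ∑ q : ZMod k,
    if p ≠ q then (φ p - φ q) ^ 2 / (cycDist k p q : ℝ) ^ 2 else 0

/-- The energy seminorm squared on `G_{k,ℓ} = C_k □ P_ℓ`. -/
def energySq (k ℓ : ℕ) [NeZero k] (u : ZMod k → ℕ → ℝ) : ℝ :=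
  (∑ i : ZMod k, ∑ j ∈ Finset.Icc 1 ℓ, (u (i + 1) j - u i j) ^ 2)
  + ∑ i : ZMod k, ∑ j ∈ Finset.Icc 1 (ℓ - 1), (u i (j + 1) - u i j) ^ 2

/-- The energy seminorm squared on a graph `H` with `G_{k,ℓ} ⊆ H ⊆ G*_{k,ℓ}`:
`|u|_H² = |u|_G²` plus the sum of `(u(i,j+1) − u(i−1,j))²` and/or
`(u(i,j+1) − u(i+1,j))²` over the subset of diagonal edges of `G*_{k,ℓ}`
selected by the indicator functions `s1` and `s2`. -/
def energySqH (k ℓ : ℕ) [NeZero k] (s1 s2 : ZMod k → ℕ → Bool)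
    (u : ZMod k → ℕ → ℝ) : ℝ :=
  energySq k ℓ u
    + ∑ i : ZMod k, ∑ j ∈ Finset.Icc 1 (ℓ - 1),
      ((if s1 i j then (u i (j + 1) - u (i - 1) j) ^ 2 else 0)
        + (if s2 i j then (u i (j + 1) - u (i + 1) j) ^ 2 else 0))

namespace DTT
set_option linter.unusedSectionVars false
set_option maxHeartbeats 1000000
set_option linter.deprecated false
variable {k : ℕ} [NeZero k]

variable {k : ℕ} [NeZero k]

def Fsq (k : ℕ) [NeZero k] (φ : ZMod k → ℝ) (s : ZMod k) : ℝ :=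
  ∑ p : ZMod k, (φ (p + s) - φ p) ^ 2

lemma Fsq_nonneg (φ : ZMod k → ℝ) (s : ZMod k) : 0 ≤ Fsq k φ s :=
  Finset.sum_nonneg fun _ _ => sq_nonneg _

lemma sum_shift (f : ZMod k → ℝ) (a : ZMod k) :
    ∑ i : ZMod k, f (i + a) = ∑ i : ZMod k, f i :=
  Fintype.sum_equiv (Equiv.addRight a) _ _ (fun _ => rfl)

lemma Fsq_neg (φ : ZMod k → ℝ) (s : ZMod k) : Fsq k φ (-s) = Fsq k φ s := by
  unfold Fsq
  rw [← sum_shift (fun p => (φ (p + -s) - φ p) ^ 2) s]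
  apply Finset.sum_congr rfl
  intro i _
  have h : i + s + -s = i := by ring
  simp only [h]; ring

lemma bSemiSq_eq (φ : ZMod k → ℝ) :
    bSemiSq k φ = (1 / 2) * ∑ s : ZMod k,
      (if s ≠ 0 then Fsq k φ s / ((min s.val (k - s.val) : ℕ) : ℝ) ^ 2 else 0) := by
  unfold bSemiSq
  congr 1
  have h1 : ∀ p : ZMod k, (∑ q : ZMod k,
      if p ≠ q then (φ p - φ q) ^ 2 / (cycDist k p q : ℝ) ^ 2 else 0)
      = ∑ s : ZMod k,
        (if s ≠ 0 then (φ (p + s) - φ p) ^ 2 / ((min s.val (k - s.val) : ℕ) : ℝ) ^ 2 else 0) := by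
    intro p
    apply Fintype.sum_equiv (Equiv.addLeft (-p))
    intro q
    by_cases hq : q = p
    · simp [hq]
    · have hqp : q - p ≠ 0 := sub_ne_zero.mpr hq
      have hs0 : -p + q ≠ 0 := by rw [neg_add_eq_sub]; exact hqp
      have hne : p ≠ q := fun h => hq h.symm
      simp only [Equiv.coe_addLeft]
      rw [if_pos hne]
      simp only [ne_eq, hs0, not_false_eq_true, ↓reduceIte]
      have e3 : p + (-p + q) = q := by ring
      have h5 : -p + q = q - p := by rw [neg_add_eq_sub]
      have h6 : k - (q - p).val = (p - q).val := by
        have hpq : p - q = -(q - p) := by ring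
        rw [hpq, ZMod.neg_val, if_neg hqp]
      have e4 : min (-p + q).val (k - (-p + q).val) = cycDist k p q := by
        rw [h5, h6, min_comm]; rfl
      rw [e3, e4]
      ring_nf
  rw [Finset.sum_congr rfl (fun p _ => h1 p), Finset.sum_comm]
  apply Finset.sum_congr rfl
  intro s _
  by_cases hs : s = 0
  · simp [hs]
  · simp only [if_pos hs, Fsq, Finset.sum_div]

lemma val_ne_zero_of_ne {s : ZMod k} (h : s ≠ 0) : s.val ≠ 0 := by
  intro h0
  apply h
  have := ZMod.natCast_rightInverse (n := k) s
  rw [← this, h0]; simp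


lemma bSemiSq_le_sum (φ : ZMod k → ℝ) :
    bSemiSq k φ ≤ ∑ n ∈ Ioc 0 (k / 2), Fsq k φ (n : ZMod k) / (n : ℝ) ^ 2 := by
  rw [bSemiSq_eq]
  set g : ℕ → ℝ := fun n => Fsq k φ (n : ZMod k) / (n : ℝ) ^ 2 with hg
  have hgnn : ∀ n, 0 ≤ g n := fun n => div_nonneg (Fsq_nonneg _ _) (sq_nonneg _)
  have hmap : ∀ s ∈ Finset.univ.filter (fun s : ZMod k => s ≠ 0),
      min s.val (k - s.val) ∈ Ioc 0 (k / 2) := by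
    intro s hs
    rw [Finset.mem_filter] at hs
    have h1 : s.val ≠ 0 := val_ne_zero_of_ne hs.2
    have h2 : s.val < k := ZMod.val_lt s
    simp only [Finset.mem_Ioc]
    omega
  have key : (∑ s : ZMod k, if s ≠ 0 then Fsq k φ s / ((min s.val (k - s.val) : ℕ) : ℝ) ^ 2 else 0)
      ≤ ∑ n ∈ Ioc 0 (k / 2), 2 * g n := by
    rw [← Finset.sum_filter, ← Finset.sum_fiberwise_of_maps_to hmap
      (fun s => Fsq k φ s / ((min s.val (k - s.val) : ℕ) : ℝ) ^ 2)]
    apply Finset.sum_le_sum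
    intro n hn
    have hterm : ∀ s ∈ (Finset.univ.filter (fun s : ZMod k => s ≠ 0)).filter
        (fun s => min s.val (k - s.val) = n),
        Fsq k φ s / ((min s.val (k - s.val) : ℕ) : ℝ) ^ 2 = g n := by
      intro s hs
      rw [Finset.mem_filter, Finset.mem_filter] at hs
      obtain ⟨⟨-, hs0⟩, hdn⟩ := hs
      have hFeq : Fsq k φ s = Fsq k φ (n : ZMod k) := by
        rcases min_cases s.val (k - s.val) with ⟨hmin, -⟩ | ⟨hmin, -⟩
        · have hv : s.val = n := by rw [← hdn]; exact hmin.symm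
          rw [← hv, ZMod.natCast_rightInverse s]
        · have hneg : (-s).val = n := by
            rw [ZMod.neg_val, if_neg hs0, ← hdn]; exact hmin.symm
          rw [← hneg, ZMod.natCast_rightInverse (-s), Fsq_neg]
      rw [hdn, hFeq]
    rw [Finset.sum_congr rfl hterm, Finset.sum_const, nsmul_eq_mul]
    have hcard : ((Finset.univ.filter (fun s : ZMod k => s ≠ 0)).filter
        (fun s => min s.val (k - s.val) = n)).card ≤ 2 := by
      have hsub : (Finset.univ.filter (fun s : ZMod k => s ≠ 0)).filter
          (fun s => min s.val (k - s.val) = n)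
          ⊆ {(n : ZMod k), -(n : ZMod k)} := by
        intro s hs
        rw [Finset.mem_filter, Finset.mem_filter] at hs
        obtain ⟨⟨-, hs0⟩, hdn⟩ := hs
        simp only [Finset.mem_insert, Finset.mem_singleton]
        rcases min_cases s.val (k - s.val) with ⟨hmin, -⟩ | ⟨hmin, -⟩
        · left
          have hv : s.val = n := by rw [← hdn]; exact hmin.symm
          rw [← hv, ZMod.natCast_rightInverse s]
        · right
          have hneg : (-s).val = n := by
            rw [ZMod.neg_val, if_neg hs0, ← hdn]; exact hmin.symm
          rw [← hneg, ZMod.natCast_rightInverse (-s), neg_neg]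
      calc _ ≤ ({(n : ZMod k), -(n : ZMod k)} : Finset (ZMod k)).card :=
            Finset.card_le_card hsub
        _ ≤ 2 := (Finset.card_insert_le _ _).trans (by simp)
    exact mul_le_mul_of_nonneg_right (by exact_mod_cast hcard) (hgnn n)
  calc (1 / 2 : ℝ) * ∑ s : ZMod k,
        (if s ≠ 0 then Fsq k φ s / ((min s.val (k - s.val) : ℕ) : ℝ) ^ 2 else 0)
      ≤ 1 / 2 * ∑ n ∈ Ioc 0 (k / 2), 2 * g n :=
        mul_le_mul_of_nonneg_left key (by norm_num)
    _ = ∑ n ∈ Ioc 0 (k / 2), g n := by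
        rw [Finset.mul_sum]; exact Finset.sum_congr rfl fun n _ => by ring

lemma sum_le_bSemiSq (φ : ZMod k → ℝ) (L : ℕ) (hL : 2 * L < k) :
    ∑ n ∈ Ioc 0 L, Fsq k φ (n : ZMod k) / (n : ℝ) ^ 2 ≤ bSemiSq k φ := by
  rw [bSemiSq_eq]
  set G : ZMod k → ℝ := fun s =>
    if s ≠ 0 then Fsq k φ s / ((min s.val (k - s.val) : ℕ) : ℝ) ^ 2 else 0 with hG
  have hGnn : ∀ s, 0 ≤ G s := by
    intro s; rw [hG]; dsimp only; split
    · exact div_nonneg (Fsq_nonneg _ _) (sq_nonneg _)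
    · exact le_rfl
  have hvaln : ∀ n ∈ Ioc 0 L, ((n : ZMod k)).val = n := by
    intro n hn
    rw [Finset.mem_Ioc] at hn
    exact ZMod.val_cast_of_lt (by omega)
  have hne0 : ∀ n ∈ Ioc 0 L, (n : ZMod k) ≠ 0 := by
    intro n hn h0
    have := hvaln n hn
    rw [h0, ZMod.val_zero] at this
    rw [Finset.mem_Ioc] at hn
    omega
  have hG1 : ∀ n ∈ Ioc 0 L, G ((n : ZMod k)) = Fsq k φ (n : ZMod k) / (n : ℝ) ^ 2 := by
    intro n hn
    rw [Finset.mem_Ioc] at hn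
    have hv := hvaln n (Finset.mem_Ioc.mpr hn)
    rw [hG]; dsimp only
    rw [if_pos (hne0 n (Finset.mem_Ioc.mpr hn)), hv]
    have : min n (k - n) = n := by omega
    rw [this]
  have hG2 : ∀ n ∈ Ioc 0 L, G (-(n : ZMod k)) = Fsq k φ (n : ZMod k) / (n : ℝ) ^ 2 := by
    intro n hn
    rw [Finset.mem_Ioc] at hn
    have hv := hvaln n (Finset.mem_Ioc.mpr hn)
    have hn0 := hne0 n (Finset.mem_Ioc.mpr hn)
    have hneg0 : -(n : ZMod k) ≠ 0 := by simpa using hn0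
    rw [hG]; dsimp only
    rw [if_pos hneg0, ZMod.neg_val, if_neg hn0, hv, Fsq_neg]
    have h1 : k - (k - n) = n := by omega
    have h2 : min (k - n) (k - (k - n)) = n := by omega
    rw [h2]
  -- the two image sets
  have hinj1 : ∀ a ∈ Ioc 0 L, ∀ b ∈ Ioc 0 L, (a : ZMod k) = (b : ZMod k) → a = b := by
    intro a ha b hb hab
    have h1 := hvaln a ha
    have h2 := hvaln b hb
    rw [← h1, ← h2, hab]
  have hinj2 : ∀ a ∈ Ioc 0 L, ∀ b ∈ Ioc 0 L, -(a : ZMod k) = -(b : ZMod k) → a = b := by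
    intro a ha b hb hab
    exact hinj1 a ha b hb (by simpa using congrArg Neg.neg hab)
  have hdisj : Disjoint ((Ioc 0 L).image (fun n : ℕ => (n : ZMod k)))
      ((Ioc 0 L).image (fun n : ℕ => -(n : ZMod k))) := by
    rw [Finset.disjoint_left]
    intro s hs1 hs2
    obtain ⟨a, ha, rfl⟩ := Finset.mem_image.mp hs1
    obtain ⟨b, hb, hba⟩ := Finset.mem_image.mp hs2
    have hva := hvaln a ha
    have hvb := hvaln b hb
    have hb0 := hne0 b hb
    have : ((-(b : ZMod k))).val = k - b := by
      rw [ZMod.neg_val, if_neg hb0, hvb]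
    rw [hba] at this
    rw [hva] at this
    rw [Finset.mem_Ioc] at ha hb
    omega
  have hsub : ((Ioc 0 L).image (fun n : ℕ => (n : ZMod k))) ∪
      ((Ioc 0 L).image (fun n : ℕ => -(n : ZMod k))) ⊆ Finset.univ :=
    Finset.subset_univ _
  have hbig : (∑ n ∈ Ioc 0 L, Fsq k φ (n : ZMod k) / (n : ℝ) ^ 2) +
      (∑ n ∈ Ioc 0 L, Fsq k φ (n : ZMod k) / (n : ℝ) ^ 2) ≤ ∑ s : ZMod k, G s := by
    have e1 : ∑ s ∈ (Ioc 0 L).image (fun n : ℕ => (n : ZMod k)), G s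
        = ∑ n ∈ Ioc 0 L, Fsq k φ (n : ZMod k) / (n : ℝ) ^ 2 := by
      rw [Finset.sum_image hinj1]
      exact Finset.sum_congr rfl hG1
    have e2 : ∑ s ∈ (Ioc 0 L).image (fun n : ℕ => -(n : ZMod k)), G s
        = ∑ n ∈ Ioc 0 L, Fsq k φ (n : ZMod k) / (n : ℝ) ^ 2 := by
      rw [Finset.sum_image hinj2]
      exact Finset.sum_congr rfl hG2
    calc _ = ∑ s ∈ ((Ioc 0 L).image (fun n : ℕ => (n : ZMod k))) ∪
          ((Ioc 0 L).image (fun n : ℕ => -(n : ZMod k))), G s := by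
          rw [Finset.sum_union hdisj, e1, e2]
      _ ≤ ∑ s : ZMod k, G s := Finset.sum_le_sum_of_subset_of_nonneg hsub
          (fun s _ _ => hGnn s)
  nlinarith [hbig]

lemma hardy_step (m x y : ℝ) (hm : 1 ≤ m) :
    (y / (m + 1)) ^ 2 + y ^ 2 / (m + 1) - x ^ 2 / m ≤ 2 * (y / (m + 1)) * (y - x) := by
  have h1 : (0:ℝ) < m := by linarith
  have h2 : (0:ℝ) < m + 1 := by linarith
  have h3 : (y / (m + 1)) ^ 2 + y ^ 2 / (m + 1) - x ^ 2 / m - 2 * (y / (m + 1)) * (y - x)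
      = -(((m * y - (m + 1) * x) ^ 2) / (m * (m + 1) ^ 2)) := by
    rw [eq_comm, neg_eq_iff_eq_neg, eq_comm]
    field_simp
    ring
  have h4 : 0 ≤ ((m * y - (m + 1) * x) ^ 2) / (m * (m + 1) ^ 2) := by positivity
  linarith [h3.le, h3.ge]

/-- Core discrete Hardy inequality with constant 4. -/
lemma hardy_core (b : ℕ → ℝ) (M : ℕ) :
    ∑ m ∈ Icc 1 M, ((∑ j ∈ Icc 1 m, b j) / m) ^ 2 ≤ 4 * ∑ m ∈ Icc 1 M, (b m) ^ 2 := by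
  set A : ℕ → ℝ := fun m => ∑ j ∈ Icc 1 m, b j with hA
  have hA0 : A 0 = 0 := by simp [hA]
  have hAsucc : ∀ m, A (m + 1) = A m + b (m + 1) := by
    intro m
    rw [hA]
    exact Finset.sum_Icc_succ_top (by omega) b
  have key : ∀ M : ℕ, (∑ m ∈ Icc 1 M, (A m / m) ^ 2) + (A M) ^ 2 / M
      ≤ 2 * ∑ m ∈ Icc 1 M, (A m / m) * b m := by
    intro M
    induction M with
    | zero => simp [hA0]
    | succ M ih =>
      rw [Finset.sum_Icc_succ_top (by omega : 1 ≤ M + 1),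
        Finset.sum_Icc_succ_top (by omega : 1 ≤ M + 1)]
      rcases Nat.eq_zero_or_pos M with hM | hM
      · subst hM
        have hA1 : A 1 = b 1 := by rw [hAsucc 0, hA0]; ring
        norm_num [hA1]
        nlinarith [sq_nonneg (b 1)]
      · have hMr : (1 : ℝ) ≤ (M : ℝ) := by exact_mod_cast hM
        have hbv : b (M + 1) = A (M + 1) - A M := by rw [hAsucc M]; ring
        have hstep := hardy_step (M : ℝ) (A M) (A (M + 1)) hMr
        rw [hbv]
        push_cast
        linarith [ih, hstep]
  have S_le : (∑ m ∈ Icc 1 M, (A m / m) ^ 2) ≤ 2 * ∑ m ∈ Icc 1 M, (A m / m) * b m := by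
    have := key M
    have h2 : 0 ≤ (A M) ^ 2 / M := by positivity
    linarith
  have CS : (∑ m ∈ Icc 1 M, (A m / m) * b m) ^ 2
      ≤ (∑ m ∈ Icc 1 M, (A m / m) ^ 2) * (∑ m ∈ Icc 1 M, (b m) ^ 2) :=
    Finset.sum_mul_sq_le_sq_mul_sq _ _ _
  have hS : 0 ≤ ∑ m ∈ Icc 1 M, (A m / m) ^ 2 := Finset.sum_nonneg fun _ _ => sq_nonneg _
  have hT : 0 ≤ ∑ m ∈ Icc 1 M, (b m) ^ 2 := Finset.sum_nonneg fun _ _ => sq_nonneg _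
  nlinarith [S_le, CS, hS, hT]

/-- Shifted Hardy: the form actually used, with numerator summed up to `n-1`. -/
lemma hardy_shift (b : ℕ → ℝ) (hb : ∀ j, 0 ≤ b j) (L : ℕ) :
    ∑ n ∈ Icc 1 L, (∑ j ∈ Icc 1 (n - 1), b j) ^ 2 / (n : ℝ) ^ 2
      ≤ 4 * ∑ j ∈ Icc 1 (L - 1), (b j) ^ 2 := by
  have step : ∀ L : ℕ, ∑ n ∈ Icc 1 L, (∑ j ∈ Icc 1 (n - 1), b j) ^ 2 / (n : ℝ) ^ 2
      ≤ ∑ m ∈ Icc 1 (L - 1), ((∑ j ∈ Icc 1 m, b j) / m) ^ 2 := by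
    intro L
    induction L with
    | zero => simp
    | succ L ih =>
      rw [Finset.sum_Icc_succ_top (by omega : 1 ≤ L + 1)]
      rcases Nat.eq_zero_or_pos L with h0 | hL
      · subst h0; simp
      · have hL1 : L - 1 + 1 = L := by omega
        have hrhs : ∑ m ∈ Icc 1 (L + 1 - 1), ((∑ j ∈ Icc 1 m, b j) / m) ^ 2
            = (∑ m ∈ Icc 1 (L - 1), ((∑ j ∈ Icc 1 m, b j) / m) ^ 2)
              + ((∑ j ∈ Icc 1 L, b j) / L) ^ 2 := by
          have : L + 1 - 1 = (L - 1) + 1 := by omega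
          rw [this, Finset.sum_Icc_succ_top (by omega : 1 ≤ L - 1 + 1), hL1]
        rw [hrhs]
        have hlast : (∑ j ∈ Icc 1 (L + 1 - 1), b j) ^ 2 / ((L + 1 : ℕ) : ℝ) ^ 2
            ≤ ((∑ j ∈ Icc 1 L, b j) / L) ^ 2 := by
          have h1 : L + 1 - 1 = L := by omega
          rw [h1, div_pow]
          have hLpos : (0:ℝ) < (L:ℝ) := by exact_mod_cast hL
          apply div_le_div_of_nonneg_left (sq_nonneg _) (by positivity)
          have hc : (L : ℝ) ≤ ((L + 1 : ℕ) : ℝ) := by push_cast; linarith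
          nlinarith [hc, hLpos]
        exact add_le_add ih hlast
  calc _ ≤ ∑ m ∈ Icc 1 (L - 1), ((∑ j ∈ Icc 1 m, b j) / m) ^ 2 := step L
    _ ≤ 4 * ∑ j ∈ Icc 1 (L - 1), (b j) ^ 2 := hardy_core b (L - 1)

lemma tail_inv_sq (ℓ : ℕ) (hℓ : 1 ≤ ℓ) (M : ℕ) :
    ∑ n ∈ Ioc ℓ M, (1 : ℝ) / (n : ℝ) ^ 2 ≤ 1 / ℓ := by
  have key : ∀ M, ℓ ≤ M → ∑ n ∈ Ioc ℓ M, (1 : ℝ) / (n : ℝ) ^ 2 ≤ 1 / ℓ - 1 / M := by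
    intro M hM
    induction M, hM using Nat.le_induction with
    | base => simp
    | succ M hM ih =>
      rw [Finset.sum_Ioc_succ_top (by omega : ℓ ≤ M)]
      have hMr : (1:ℝ) ≤ (M : ℝ) := by exact_mod_cast hℓ.trans hM
      have h1 : (1:ℝ) / ((M:ℝ) + 1) ^ 2 ≤ 1 / (M:ℝ) - 1 / ((M:ℝ) + 1) := by
        rw [div_sub_div _ _ (by linarith) (by linarith)]
        rw [div_le_div_iff₀ (by positivity) (by positivity)]
        nlinarith [hMr]
      push_cast
      push_cast at ih
      linarith [ih, h1]
  rcases le_or_gt ℓ M with h | h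
  · have := key M h
    have h2 : (0:ℝ) ≤ 1 / M := by positivity
    linarith
  · rw [Finset.Ioc_eq_empty (by omega), Finset.sum_empty]
    positivity

/-- `∑_{j=s}^{M} 1/(j(j+1)²) ≤ 1/(s(s+1))`. -/
lemma tail_telescope (s : ℕ) (hs : 1 ≤ s) (M : ℕ) :
    ∑ j ∈ Icc s M, (1 : ℝ) / ((j : ℝ) * ((j : ℝ) + 1) ^ 2) ≤ 1 / ((s : ℝ) * ((s : ℝ) + 1)) := by
  have key : ∀ M, s - 1 ≤ M → ∑ j ∈ Icc s M, (1 : ℝ) / ((j : ℝ) * ((j : ℝ) + 1) ^ 2)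
      ≤ 1 / ((s : ℝ) * ((s : ℝ) + 1)) - 1 / (((M:ℝ) + 1) * ((M : ℝ) + 2)) := by
    intro M hM
    induction M, hM using Nat.le_induction with
    | base =>
      have h2 : Icc s (s - 1) = ∅ := Finset.Icc_eq_empty (by omega)
      rw [h2, Finset.sum_empty]
      have : ((s - 1 : ℕ) : ℝ) = (s : ℝ) - 1 := by
        push_cast [hs]; ring
      rw [this]
      have hsr : (1:ℝ) ≤ (s:ℝ) := by exact_mod_cast hs
      have : (s:ℝ) - 1 + 1 = (s:ℝ) := by ring
      rw [this]
      have : (s:ℝ) - 1 + 2 = (s:ℝ) + 1 := by ring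
      rw [this]
      simp
    | succ M hM ih =>
      rw [Finset.sum_Icc_succ_top (by omega : s ≤ M + 1)]
      have hMr : (0:ℝ) ≤ (M : ℝ) := Nat.cast_nonneg M
      have h1 : (1:ℝ) / (((M:ℝ)+1) * ((M:ℝ)+2) ^ 2)
          ≤ 1 / (((M:ℝ) + 1) * ((M : ℝ) + 2)) - 1 / (((M:ℝ) + 2) * ((M : ℝ) + 3)) := by
        rw [div_sub_div _ _ (by positivity) (by positivity)]
        rw [div_le_div_iff₀ (by positivity) (by positivity)]
        nlinarith [sq_nonneg (((M:ℝ) + 1) * ((M:ℝ) + 2))]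
      push_cast
      push_cast at ih
      have e1 : (M:ℝ) + 1 + 1 = (M:ℝ) + 2 := by ring
      have e2 : (M:ℝ) + 1 + 2 = (M:ℝ) + 3 := by ring
      rw [e1, e2]
      linarith [ih, h1]
  rcases le_or_gt s M with h | h
  · have := key M (by omega)
    have h2 : (0:ℝ) ≤ 1 / (((M:ℝ) + 1) * ((M : ℝ) + 2)) := by positivity
    linarith
  · rw [Finset.Icc_eq_empty (by omega), Finset.sum_empty]
    positivity

/-- Sum interchange for triangular double sums. -/
lemma tri_swap (M : ℕ) (a : ℕ → ℕ → ℝ) :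
    ∑ j ∈ Icc 1 M, ∑ t ∈ range j, a j t = ∑ t ∈ range M, ∑ j ∈ Icc (t + 1) M, a j t := by
  induction M with
  | zero => simp
  | succ M ih =>
    have h1 : ∀ t ∈ range M, ∑ j ∈ Icc (t + 1) (M + 1), a j t
        = (∑ j ∈ Icc (t + 1) M, a j t) + a (M + 1) t := by
      intro t ht
      rw [Finset.mem_range] at ht
      exact Finset.sum_Icc_succ_top (by omega) _
    have hL : ∑ j ∈ Icc 1 (M + 1), ∑ t ∈ range j, a j t
        = (∑ j ∈ Icc 1 M, ∑ t ∈ range j, a j t) + ∑ t ∈ range (M + 1), a (M + 1) t :=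
      Finset.sum_Icc_succ_top (by omega) _
    have hR : ∑ t ∈ range (M + 1), ∑ j ∈ Icc (t + 1) (M + 1), a j t
        = (∑ t ∈ range M, ∑ j ∈ Icc (t + 1) (M + 1), a j t) + ∑ j ∈ Icc (M + 1) (M + 1), a j M :=
      Finset.sum_range_succ _ M
    rw [hL, hR, ih, Finset.sum_congr rfl h1, Finset.sum_add_distrib, Finset.Icc_self,
      Finset.sum_singleton, Finset.sum_range_succ]
    ring

/-- Conversion between `range` and `Ioc` indexing. -/
lemma range_shift (g : ℕ → ℝ) (L : ℕ) : ∑ t ∈ range L, g (t + 1) = ∑ n ∈ Ioc 0 L, g n := by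
  induction L with
  | zero => simp
  | succ L ih => rw [Finset.sum_range_succ, ih, Finset.sum_Ioc_succ_top (by omega)]

lemma gauss_Icc (a : ℕ) : ∀ b, a ≤ b →
    2 * ∑ h ∈ Icc (a + 1) b, ((h : ℝ) - 1) = ((b:ℝ) - a) * ((a:ℝ) + b - 1) := by
  intro b hb
  induction b, hb using Nat.le_induction with
  | base =>
    rw [Finset.Icc_eq_empty (by omega)]
    simp
  | succ b hb ih =>
    rw [Finset.sum_Icc_succ_top (by omega : a + 1 ≤ b + 1)]
    push_cast
    push_cast at ih
    nlinarith [ih]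

/-- Gauss-type bound for the window sums. -/
lemma window_sum_le (ℓ : ℕ) (hℓ : 2 ≤ ℓ) :
    ∑ h ∈ Icc (ℓ / 2 + 1) ℓ, ((h : ℝ) - 1)
      ≤ ((Icc (ℓ / 2 + 1) ℓ).card : ℝ) * (3 * (ℓ:ℝ) - 2) / 4 := by
  have hm : ℓ / 2 ≤ ℓ := Nat.div_le_self _ _
  have hG := gauss_Icc (ℓ / 2) ℓ hm
  have hcard : (Icc (ℓ / 2 + 1) ℓ).card = ℓ - ℓ / 2 := by
    rw [Nat.card_Icc]; omega
  have hc : ((Icc (ℓ / 2 + 1) ℓ).card : ℝ) = (ℓ:ℝ) - (ℓ/2 : ℕ) := by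
    rw [hcard]; push_cast [hm]; ring
  have h2m : 2 * (ℓ / 2 : ℕ) ≤ ℓ := Nat.div_mul_le_self ℓ 2 |>.trans_eq' (by ring_nf)
  have h2mr : 2 * ((ℓ/2 : ℕ) : ℝ) ≤ (ℓ:ℝ) := by exact_mod_cast h2m
  have hmr : ((ℓ/2 : ℕ) : ℝ) ≤ (ℓ:ℝ) := by exact_mod_cast hm
  rw [hc]
  nlinarith [hG, hmr, h2mr]

lemma zmod_telescope (u : ZMod k → ℕ → ℝ) (h : ℕ) (i : ZMod k) (n : ℕ) :
    u (i + (n : ZMod k)) h - u i h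
      = ∑ t ∈ range n, (u (i + (t : ZMod k) + 1) h - u (i + (t : ZMod k)) h) := by
  induction n with
  | zero => simp
  | succ n ih =>
    rw [Finset.sum_range_succ, ← ih]
    have e : i + ((n + 1 : ℕ) : ZMod k) = i + (n : ZMod k) + 1 := by
      push_cast; ring
    rw [e]; ring

lemma cross_bound (u : ZMod k → ℕ → ℝ) (h n : ℕ) :
    ∑ i : ZMod k, (u (i + (n : ZMod k)) h - u i h) ^ 2
      ≤ (n : ℝ) ^ 2 * ∑ i : ZMod k, (u (i + 1) h - u i h) ^ 2 := by
  have step : ∀ i : ZMod k, (u (i + (n : ZMod k)) h - u i h) ^ 2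
      ≤ (n:ℝ) * ∑ t ∈ range n, (u (i + (t : ZMod k) + 1) h - u (i + (t : ZMod k)) h) ^ 2 := by
    intro i
    rw [zmod_telescope u h i n]
    calc (∑ t ∈ range n, (u (i + (t : ZMod k) + 1) h - u (i + (t : ZMod k)) h)) ^ 2
        ≤ ((range n).card : ℝ) * ∑ t ∈ range n,
            (u (i + (t : ZMod k) + 1) h - u (i + (t : ZMod k)) h) ^ 2 :=
          sq_sum_le_card_mul_sum_sq
      _ = (n:ℝ) * _ := by rw [Finset.card_range]
  calc ∑ i : ZMod k, (u (i + (n : ZMod k)) h - u i h) ^ 2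
      ≤ ∑ i : ZMod k, (n:ℝ) * ∑ t ∈ range n,
          (u (i + (t : ZMod k) + 1) h - u (i + (t : ZMod k)) h) ^ 2 :=
        Finset.sum_le_sum fun i _ => step i
    _ = (n:ℝ) * ∑ t ∈ range n, ∑ i : ZMod k,
          (u (i + (t : ZMod k) + 1) h - u (i + (t : ZMod k)) h) ^ 2 := by
        rw [← Finset.mul_sum, Finset.sum_comm]
    _ = (n:ℝ) * ∑ t ∈ range n, ∑ i : ZMod k, (u (i + 1) h - u i h) ^ 2 := by
        congr 1
        apply Finset.sum_congr rfl
        intro t _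
        exact sum_shift (fun i => (u (i + 1) h - u i h) ^ 2) ((t : ZMod k))
    _ = (n:ℝ)^2 * ∑ i : ZMod k, (u (i + 1) h - u i h) ^ 2 := by
        rw [Finset.sum_const, Finset.card_range, nsmul_eq_mul]; ring

lemma col_telescope (u : ZMod k → ℕ → ℝ) (i : ZMod k) (n : ℕ) (hn : 1 ≤ n) :
    u i n - u i 1 = ∑ j ∈ Icc 1 (n - 1), (u i (j + 1) - u i j) := by
  induction n, hn using Nat.le_induction with
  | base => simp
  | succ n hn ih =>
    have e : n - 1 + 1 = n := by omega
    have e2 : n + 1 - 1 = n := by omega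
    rw [e2, ← e, Finset.sum_Icc_succ_top (by omega : 1 ≤ n - 1 + 1), ← ih, e]
    ring

lemma col_sq_le (u : ZMod k → ℕ → ℝ) (i : ZMod k) (n : ℕ) (hn : 1 ≤ n) :
    (u i 1 - u i n) ^ 2 ≤ ((n:ℝ) - 1) * ∑ j ∈ Icc 1 (n - 1), (u i (j + 1) - u i j) ^ 2 := by
  have h1 : (u i 1 - u i n) ^ 2 = (u i n - u i 1) ^ 2 := by ring
  rw [h1, col_telescope u i n hn]
  calc (∑ j ∈ Icc 1 (n - 1), (u i (j + 1) - u i j)) ^ 2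
      ≤ ((Icc 1 (n - 1)).card : ℝ) * ∑ j ∈ Icc 1 (n - 1), (u i (j + 1) - u i j) ^ 2 :=
        sq_sum_le_card_mul_sum_sq
    _ ≤ ((n:ℝ) - 1) * ∑ j ∈ Icc 1 (n - 1), (u i (j + 1) - u i j) ^ 2 := by
        apply mul_le_mul_of_nonneg_right _ (Finset.sum_nonneg fun _ _ => sq_nonneg _)
        rw [Nat.card_Icc]
        have : n - 1 + 1 - 1 = n - 1 := by omega
        rw [this]
        push_cast [hn]
        linarith

lemma col_abs_le (u : ZMod k → ℕ → ℝ) (i : ZMod k) (n : ℕ) (hn : 1 ≤ n) :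
    (u i 1 - u i n) ^ 2 ≤ (∑ j ∈ Icc 1 (n - 1), |u i (j + 1) - u i j|) ^ 2 := by
  have h1 : |u i 1 - u i n| ≤ ∑ j ∈ Icc 1 (n - 1), |u i (j + 1) - u i j| := by
    rw [abs_sub_comm, col_telescope u i n hn]
    exact Finset.abs_sum_le_sum_abs _ _
  calc (u i 1 - u i n) ^ 2 = |u i 1 - u i n| ^ 2 := (sq_abs _).symm
    _ ≤ (∑ j ∈ Icc 1 (n - 1), |u i (j + 1) - u i j|) ^ 2 :=
        pow_le_pow_left₀ (abs_nonneg _) h1 2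


lemma part_one (ℓ c : ℕ) (h1 : 4 * ℓ < k) (h2 : k < 2 * c * ℓ) (hℓ : 2 ≤ ℓ)
    (φ : ZMod k → ℝ) (u : ZMod k → ℕ → ℝ) (hu : ∀ i, u i 1 = φ i) :
    bSemiSq k φ ≤ max (3 * (c : ℝ)) (4 * Real.pi ^ 2) *
      ((∑ j ∈ Icc 1 ℓ, ∑ i : ZMod k, (u (i + 1) j - u i j) ^ 2)
        + ∑ j ∈ Icc 1 (ℓ - 1), ∑ i : ZMod k, (u i (j + 1) - u i j) ^ 2) := by
  set H : ℕ → ℝ := fun j => ∑ i : ZMod k, (u (i + 1) j - u i j) ^ 2 with hH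
  set V : ℕ → ℝ := fun j => ∑ i : ZMod k, (u i (j + 1) - u i j) ^ 2 with hV
  set T : ℕ → ℝ := fun h => ∑ i : ZMod k, (u i 1 - u i h) ^ 2 with hT
  set SH : ℝ := ∑ j ∈ Icc 1 ℓ, H j with hSH
  set SV : ℝ := ∑ j ∈ Icc 1 (ℓ - 1), V j with hSV
  have hHnn : ∀ j, 0 ≤ H j := fun j => Finset.sum_nonneg fun _ _ => sq_nonneg _
  have hSHnn : 0 ≤ SH := Finset.sum_nonneg fun j _ => hHnn j
  have hSVnn : 0 ≤ SV :=
    Finset.sum_nonneg fun j _ => Finset.sum_nonneg fun _ _ => sq_nonneg _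
  have hc3 : 3 ≤ c := by
    have h4 : 4 * ℓ < 2 * c * ℓ := lt_trans h1 h2
    rcases Nat.lt_or_ge c 3 with hc | hc
    · exfalso
      have h5 : 2 * c ≤ 4 := by omega
      have h6 : 2 * c * ℓ ≤ 4 * ℓ := Nat.mul_le_mul_right ℓ h5
      omega
    · exact hc
  -- `T h ≤ (h-1) SV`
  have hTle : ∀ h, 1 ≤ h → h ≤ ℓ → T h ≤ ((h : ℝ) - 1) * SV := by
    intro h hh1 hhl
    have hh1r : (1:ℝ) ≤ (h:ℝ) := by exact_mod_cast hh1
    have step : ∀ i : ZMod k, (u i 1 - u i h) ^ 2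
        ≤ ((h:ℝ) - 1) * ∑ j ∈ Icc 1 (ℓ - 1), (u i (j + 1) - u i j) ^ 2 := by
      intro i
      calc (u i 1 - u i h) ^ 2
          ≤ ((h:ℝ) - 1) * ∑ j ∈ Icc 1 (h - 1), (u i (j + 1) - u i j) ^ 2 :=
            col_sq_le u i h hh1
        _ ≤ ((h:ℝ) - 1) * ∑ j ∈ Icc 1 (ℓ - 1), (u i (j + 1) - u i j) ^ 2 := by
            apply mul_le_mul_of_nonneg_left _ (by linarith)
            apply Finset.sum_le_sum_of_subset_of_nonneg
            · exact Finset.Icc_subset_Icc le_rfl (by omega)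
            · intro j _ _; exact sq_nonneg _
    calc T h ≤ ∑ i : ZMod k, ((h:ℝ) - 1) * ∑ j ∈ Icc 1 (ℓ - 1), (u i (j + 1) - u i j) ^ 2 :=
          Finset.sum_le_sum fun i _ => step i
      _ = ((h:ℝ) - 1) * ∑ i : ZMod k, ∑ j ∈ Icc 1 (ℓ - 1), (u i (j + 1) - u i j) ^ 2 :=
          (Finset.mul_sum _ _ _).symm
      _ = ((h:ℝ) - 1) * SV := by rw [hSV, Finset.sum_comm]
  -- short-range bound
  have hshort : ∀ n : ℕ, Fsq k φ (n : ZMod k) ≤ 3 * (n:ℝ) ^ 2 * H n + 6 * T n := by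
    intro n
    have key : ∀ i : ZMod k, (φ (i + (n : ZMod k)) - φ i) ^ 2
        ≤ 3 * (u (i + (n : ZMod k)) 1 - u (i + (n : ZMod k)) n) ^ 2
          + 3 * (u (i + (n : ZMod k)) n - u i n) ^ 2 + 3 * (u i n - u i 1) ^ 2 := by
      intro i
      have e : φ (i + (n : ZMod k)) - φ i
          = (u (i + (n : ZMod k)) 1 - u (i + (n : ZMod k)) n)
            + (u (i + (n : ZMod k)) n - u i n) + (u i n - u i 1) := by
        rw [hu, hu]; ring
      rw [e]
      nlinarith [sq_nonneg ((u (i + (n : ZMod k)) 1 - u (i + (n : ZMod k)) n)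
          - (u (i + (n : ZMod k)) n - u i n)),
        sq_nonneg ((u (i + (n : ZMod k)) n - u i n) - (u i n - u i 1)),
        sq_nonneg ((u (i + (n : ZMod k)) 1 - u (i + (n : ZMod k)) n) - (u i n - u i 1))]
    have hsplit : Fsq k φ (n : ZMod k)
        ≤ 3 * (∑ i : ZMod k, (u (i + (n : ZMod k)) 1 - u (i + (n : ZMod k)) n) ^ 2)
          + 3 * (∑ i : ZMod k, (u (i + (n : ZMod k)) n - u i n) ^ 2)
          + 3 * (∑ i : ZMod k, (u i n - u i 1) ^ 2) := by
      unfold Fsq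
      calc ∑ i : ZMod k, (φ (i + (n : ZMod k)) - φ i) ^ 2
          ≤ ∑ i : ZMod k, (3 * (u (i + (n : ZMod k)) 1 - u (i + (n : ZMod k)) n) ^ 2
            + 3 * (u (i + (n : ZMod k)) n - u i n) ^ 2 + 3 * (u i n - u i 1) ^ 2) :=
            Finset.sum_le_sum fun i _ => key i
        _ = _ := by rw [Finset.sum_add_distrib, Finset.sum_add_distrib,
              ← Finset.mul_sum, ← Finset.mul_sum, ← Finset.mul_sum]
    have e1 : ∑ i : ZMod k, (u (i + (n : ZMod k)) 1 - u (i + (n : ZMod k)) n) ^ 2 = T n :=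
      sum_shift (fun i => (u i 1 - u i n) ^ 2) ((n : ZMod k))
    have e2 : ∑ i : ZMod k, (u (i + (n : ZMod k)) n - u i n) ^ 2 ≤ (n:ℝ)^2 * H n :=
      cross_bound u n n
    have e3 : ∑ i : ZMod k, (u i n - u i 1) ^ 2 = T n := by
      apply Finset.sum_congr rfl; intro i _; ring
    rw [e1, e3] at hsplit
    linarith [hsplit, e2]
  -- Hardy application
  have hhardy : ∑ n ∈ Icc 1 ℓ, T n / (n:ℝ) ^ 2 ≤ 4 * SV := by
    have e0 : ∑ n ∈ Icc 1 ℓ, T n / (n:ℝ) ^ 2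
        = ∑ i : ZMod k, ∑ n ∈ Icc 1 ℓ, (u i 1 - u i n) ^ 2 / (n:ℝ) ^ 2 := by
      rw [Finset.sum_comm]
      apply Finset.sum_congr rfl
      intro n _
      rw [hT, Finset.sum_div]
    rw [e0]
    have percol : ∀ i : ZMod k, ∑ n ∈ Icc 1 ℓ, (u i 1 - u i n) ^ 2 / (n:ℝ) ^ 2
        ≤ 4 * ∑ j ∈ Icc 1 (ℓ - 1), (u i (j + 1) - u i j) ^ 2 := by
      intro i
      have s1 : ∑ n ∈ Icc 1 ℓ, (u i 1 - u i n) ^ 2 / (n:ℝ) ^ 2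
          ≤ ∑ n ∈ Icc 1 ℓ, (∑ j ∈ Icc 1 (n - 1), |u i (j + 1) - u i j|) ^ 2 / (n:ℝ) ^ 2 := by
        apply Finset.sum_le_sum
        intro n hn
        have hn1 : 1 ≤ n := (Finset.mem_Icc.mp hn).1
        have hnp : (0:ℝ) < (n:ℝ) ^ 2 := by
          have : (0:ℝ) < (n:ℝ) := by exact_mod_cast hn1
          positivity
        exact div_le_div_of_nonneg_right (col_abs_le u i n hn1) hnp.le
      have s2 := hardy_shift (fun j => |u i (j + 1) - u i j|) (fun j => abs_nonneg _) ℓ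
      have s3 : ∑ j ∈ Icc 1 (ℓ - 1), |u i (j + 1) - u i j| ^ 2
          = ∑ j ∈ Icc 1 (ℓ - 1), (u i (j + 1) - u i j) ^ 2 :=
        Finset.sum_congr rfl fun j _ => sq_abs _
      calc ∑ n ∈ Icc 1 ℓ, (u i 1 - u i n) ^ 2 / (n:ℝ) ^ 2
          ≤ ∑ n ∈ Icc 1 ℓ, (∑ j ∈ Icc 1 (n - 1), |u i (j + 1) - u i j|) ^ 2 / (n:ℝ) ^ 2 := s1
        _ ≤ 4 * ∑ j ∈ Icc 1 (ℓ - 1), |u i (j + 1) - u i j| ^ 2 := s2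
        _ = 4 * ∑ j ∈ Icc 1 (ℓ - 1), (u i (j + 1) - u i j) ^ 2 := by rw [s3]
    calc ∑ i : ZMod k, ∑ n ∈ Icc 1 ℓ, (u i 1 - u i n) ^ 2 / (n:ℝ) ^ 2
        ≤ ∑ i : ZMod k, 4 * ∑ j ∈ Icc 1 (ℓ - 1), (u i (j + 1) - u i j) ^ 2 :=
          Finset.sum_le_sum fun i _ => percol i
      _ = 4 * SV := by
          rw [← Finset.mul_sum, hSV, Finset.sum_comm]
  -- short sum
  have hshortsum : ∑ n ∈ Ioc 0 ℓ, Fsq k φ (n : ZMod k) / (n:ℝ) ^ 2 ≤ 3 * SH + 24 * SV := by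
    rw [← Finset.Icc_add_one_left_eq_Ioc]
    have pern : ∀ n ∈ Icc 1 ℓ, Fsq k φ (n : ZMod k) / (n:ℝ) ^ 2
        ≤ 3 * H n + 6 * (T n / (n:ℝ) ^ 2) := by
      intro n hn
      have hn1 : 1 ≤ n := (Finset.mem_Icc.mp hn).1
      have hnr : (0:ℝ) < (n:ℝ) := by exact_mod_cast hn1
      have e : 3 * H n + 6 * (T n / (n:ℝ) ^ 2) = (3 * (n:ℝ)^2 * H n + 6 * T n) / (n:ℝ)^2 := by
        field_simp
      rw [e]
      exact div_le_div_of_nonneg_right (hshort n) (by positivity)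
    calc ∑ n ∈ Icc 1 ℓ, Fsq k φ (n : ZMod k) / (n:ℝ) ^ 2
        ≤ ∑ n ∈ Icc 1 ℓ, (3 * H n + 6 * (T n / (n:ℝ) ^ 2)) := Finset.sum_le_sum pern
      _ = 3 * SH + 6 * ∑ n ∈ Icc 1 ℓ, T n / (n:ℝ) ^ 2 := by
          rw [Finset.sum_add_distrib, ← Finset.mul_sum, ← Finset.mul_sum, hSH]
      _ ≤ 3 * SH + 6 * (4 * SV) := by linarith [hhardy]
      _ = 3 * SH + 24 * SV := by ring
  -- long range
  have hℓ2 : ℓ ≤ k / 2 := by omega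
  have hWne : ℓ / 2 + 1 ≤ ℓ := by omega
  have hwcard : (Icc (ℓ / 2 + 1) ℓ).card = ℓ - ℓ / 2 := by rw [Nat.card_Icc]; omega
  have hwpos : 0 < ℓ - ℓ / 2 := by omega
  have hwr : (ℓ:ℝ) / 2 ≤ ((ℓ - ℓ / 2 : ℕ) : ℝ) := by
    have : ℓ ≤ 2 * (ℓ - ℓ / 2) := by omega
    have := (Nat.cast_le (α := ℝ)).mpr this
    push_cast at this
    linarith
  have hlongn : ∀ n ∈ Ioc ℓ (k / 2), Fsq k φ (n : ZMod k) / (n:ℝ) ^ 2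
      ≤ (5 / (4 * ((ℓ - ℓ / 2 : ℕ) : ℝ))) * ∑ h' ∈ Icc (ℓ / 2 + 1) ℓ, H h'
        + 5 * (3 * (ℓ:ℝ) - 2) * SV / (n:ℝ) ^ 2 := by
    intro n hn
    rw [Finset.mem_Ioc] at hn
    have hn1 : 1 ≤ n := by omega
    have hnr : (0:ℝ) < (n:ℝ) := by exact_mod_cast hn1
    have perh : ∀ h' ∈ Icc (ℓ / 2 + 1) ℓ, Fsq k φ (n : ZMod k)
        ≤ (5/4) * (n:ℝ)^2 * H h' + 20 * ((h':ℝ) - 1) * SV := by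
      intro h' hh'
      rw [Finset.mem_Icc] at hh'
      have hh1 : 1 ≤ h' := by omega
      have key : ∀ i : ZMod k, (φ (i + (n : ZMod k)) - φ i) ^ 2
          ≤ (5/4) * (u (i + (n : ZMod k)) h' - u i h') ^ 2
            + 10 * (u (i + (n : ZMod k)) 1 - u (i + (n : ZMod k)) h') ^ 2
            + 10 * (u i h' - u i 1) ^ 2 := by
        intro i
        have e : φ (i + (n : ZMod k)) - φ i
            = (u (i + (n : ZMod k)) 1 - u (i + (n : ZMod k)) h')
              + (u (i + (n : ZMod k)) h' - u i h') + (u i h' - u i 1) := by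
          rw [hu, hu]; ring
        rw [e]
        nlinarith [sq_nonneg ((u (i + (n : ZMod k)) h' - u i h') / 2
            - 2 * ((u (i + (n : ZMod k)) 1 - u (i + (n : ZMod k)) h') + (u i h' - u i 1))),
          sq_nonneg ((u (i + (n : ZMod k)) 1 - u (i + (n : ZMod k)) h') - (u i h' - u i 1))]
      have hsplit : Fsq k φ (n : ZMod k)
          ≤ (5/4) * (∑ i : ZMod k, (u (i + (n : ZMod k)) h' - u i h') ^ 2)
            + 10 * (∑ i : ZMod k, (u (i + (n : ZMod k)) 1 - u (i + (n : ZMod k)) h') ^ 2)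
            + 10 * (∑ i : ZMod k, (u i h' - u i 1) ^ 2) := by
        unfold Fsq
        calc ∑ i : ZMod k, (φ (i + (n : ZMod k)) - φ i) ^ 2
            ≤ ∑ i : ZMod k, ((5/4) * (u (i + (n : ZMod k)) h' - u i h') ^ 2
              + 10 * (u (i + (n : ZMod k)) 1 - u (i + (n : ZMod k)) h') ^ 2
              + 10 * (u i h' - u i 1) ^ 2) := Finset.sum_le_sum fun i _ => key i
          _ = _ := by rw [Finset.sum_add_distrib, Finset.sum_add_distrib,
                ← Finset.mul_sum, ← Finset.mul_sum, ← Finset.mul_sum]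
      have e1 : ∑ i : ZMod k, (u (i + (n : ZMod k)) 1 - u (i + (n : ZMod k)) h') ^ 2 = T h' :=
        sum_shift (fun i => (u i 1 - u i h') ^ 2) ((n : ZMod k))
      have e2 : ∑ i : ZMod k, (u (i + (n : ZMod k)) h' - u i h') ^ 2 ≤ (n:ℝ)^2 * H h' :=
        cross_bound u h' n
      have e3 : ∑ i : ZMod k, (u i h' - u i 1) ^ 2 = T h' := by
        apply Finset.sum_congr rfl; intro i _; ring
      rw [e1, e3] at hsplit
      have e4 := hTle h' hh1 hh'.2
      nlinarith [hsplit, e2, e4, sq_nonneg (n:ℝ)]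
    -- average over the window
    have havg : ((ℓ - ℓ / 2 : ℕ) : ℝ) * Fsq k φ (n : ZMod k)
        ≤ (5/4) * (n:ℝ)^2 * ∑ h' ∈ Icc (ℓ / 2 + 1) ℓ, H h'
          + 20 * SV * ∑ h' ∈ Icc (ℓ / 2 + 1) ℓ, ((h':ℝ) - 1) := by
      have := Finset.card_nsmul_le_sum (Icc (ℓ / 2 + 1) ℓ)
        (fun h' => (5/4) * (n:ℝ)^2 * H h' + 20 * ((h':ℝ) - 1) * SV) (Fsq k φ (n : ZMod k))
        (fun h' hh' => perh h' hh')
      rw [hwcard, nsmul_eq_mul] at this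
      calc ((ℓ - ℓ / 2 : ℕ) : ℝ) * Fsq k φ (n : ZMod k)
          ≤ ∑ h' ∈ Icc (ℓ / 2 + 1) ℓ, ((5/4) * (n:ℝ)^2 * H h' + 20 * ((h':ℝ) - 1) * SV) :=
            this
        _ = (5/4) * (n:ℝ)^2 * ∑ h' ∈ Icc (ℓ / 2 + 1) ℓ, H h'
            + 20 * SV * ∑ h' ∈ Icc (ℓ / 2 + 1) ℓ, ((h':ℝ) - 1) := by
            rw [Finset.sum_add_distrib, ← Finset.mul_sum]
            congr 1
            rw [Finset.mul_sum]
            apply Finset.sum_congr rfl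
            intro x _
            ring
    have hwin := window_sum_le ℓ hℓ
    rw [hwcard] at hwin
    have havg2 : ((ℓ - ℓ / 2 : ℕ) : ℝ) * Fsq k φ (n : ZMod k)
        ≤ (5/4) * (n:ℝ)^2 * ∑ h' ∈ Icc (ℓ / 2 + 1) ℓ, H h'
          + 20 * SV * (((ℓ - ℓ / 2 : ℕ) : ℝ) * (3 * (ℓ:ℝ) - 2) / 4) := by
      have h20 : (0:ℝ) ≤ 20 * SV := by linarith
      nlinarith [havg, hwin, h20]
    -- divide by w and n^2
    have hwrpos : (0:ℝ) < ((ℓ - ℓ / 2 : ℕ) : ℝ) := by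
      have h2r : (2:ℝ) ≤ (ℓ:ℝ) := by exact_mod_cast hℓ
      linarith [hwr]
    have hF : Fsq k φ (n : ZMod k)
        ≤ ((5/4) * (n:ℝ)^2 * ∑ h' ∈ Icc (ℓ / 2 + 1) ℓ, H h'
          + 20 * SV * (((ℓ - ℓ / 2 : ℕ) : ℝ) * (3 * (ℓ:ℝ) - 2) / 4)) / ((ℓ - ℓ / 2 : ℕ) : ℝ) := by
      rw [le_div_iff₀ hwrpos, mul_comm]
      exact havg2
    have hF2 : Fsq k φ (n : ZMod k) / (n:ℝ)^2
        ≤ (((5/4) * (n:ℝ)^2 * ∑ h' ∈ Icc (ℓ / 2 + 1) ℓ, H h'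
          + 20 * SV * (((ℓ - ℓ / 2 : ℕ) : ℝ) * (3 * (ℓ:ℝ) - 2) / 4)) / ((ℓ - ℓ / 2 : ℕ) : ℝ))
            / (n:ℝ)^2 :=
      div_le_div_of_nonneg_right hF (by positivity)
    calc Fsq k φ (n : ZMod k) / (n:ℝ)^2 ≤ _ := hF2
      _ = (5 / (4 * ((ℓ - ℓ / 2 : ℕ) : ℝ))) * ∑ h' ∈ Icc (ℓ / 2 + 1) ℓ, H h'
          + 5 * (3 * (ℓ:ℝ) - 2) * SV / (n:ℝ) ^ 2 := by
        field_simp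
        ring
  -- sum the long-range bounds
  have hNcard : ((Ioc ℓ (k / 2)).card : ℝ) ≤ (k:ℝ)/2 - (ℓ:ℝ) := by
    rw [Nat.card_Ioc]
    have hcd : ((k / 2 - ℓ : ℕ) : ℝ) = ((k / 2 : ℕ) : ℝ) - (ℓ:ℝ) := by
      push_cast [hℓ2]
      ring
    rw [hcd]
    have := Nat.cast_div_le (α := ℝ) (m := k) (n := 2)
    push_cast at this
    linarith
  have hcoef : ((Ioc ℓ (k / 2)).card : ℝ) * (5 / (4 * ((ℓ - ℓ / 2 : ℕ) : ℝ))) ≤ 3 * (c:ℝ) - 3 := by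
    have h2r : (2:ℝ) ≤ (ℓ:ℝ) := by exact_mod_cast hℓ
    have hc3r : (3:ℝ) ≤ (c:ℝ) := by exact_mod_cast hc3
    have hkr : (k:ℝ) ≤ 2 * (c:ℝ) * (ℓ:ℝ) - 1 := by
      have : (k:ℝ) + 1 ≤ 2 * (c:ℝ) * (ℓ:ℝ) := by exact_mod_cast h2
      linarith
    have hwrpos : (0:ℝ) < ((ℓ - ℓ / 2 : ℕ) : ℝ) := by linarith [hwr]
    have e : ((Ioc ℓ (k / 2)).card : ℝ) * (5 / (4 * ((ℓ - ℓ / 2 : ℕ) : ℝ)))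
        = 5 * ((Ioc ℓ (k / 2)).card : ℝ) / (4 * ((ℓ - ℓ / 2 : ℕ) : ℝ)) := by ring
    rw [e]
    have hd : 5 * ((Ioc ℓ (k / 2)).card : ℝ) / (4 * ((ℓ - ℓ / 2 : ℕ) : ℝ))
        ≤ 5 * ((k:ℝ)/2 - (ℓ:ℝ)) / (2 * (ℓ:ℝ)) := by
      apply div_le_div₀ (by nlinarith) (by nlinarith [hNcard]) (by linarith)
      linarith [hwr]
    have hfin : 5 * ((k:ℝ)/2 - (ℓ:ℝ)) / (2 * (ℓ:ℝ)) ≤ 3 * (c:ℝ) - 3 := by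
      rw [div_le_iff₀ (by linarith)]
      nlinarith [hkr, hc3r, h2r]
    linarith
  have hlongsum : ∑ n ∈ Ioc ℓ (k / 2), Fsq k φ (n : ZMod k) / (n:ℝ) ^ 2
      ≤ (3 * (c:ℝ) - 3) * SH + 15 * SV := by
    have hWsub : ∑ h' ∈ Icc (ℓ / 2 + 1) ℓ, H h' ≤ SH := by
      apply Finset.sum_le_sum_of_subset_of_nonneg
      · exact Finset.Icc_subset_Icc (by omega) le_rfl
      · intro j _ _; exact hHnn j
    have hWnn : 0 ≤ ∑ h' ∈ Icc (ℓ / 2 + 1) ℓ, H h' :=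
      Finset.sum_nonneg fun j _ => hHnn j
    have hwrpos : (0:ℝ) < ((ℓ - ℓ / 2 : ℕ) : ℝ) := by
      have h2r : (2:ℝ) ≤ (ℓ:ℝ) := by exact_mod_cast hℓ
      linarith [hwr]
    calc ∑ n ∈ Ioc ℓ (k / 2), Fsq k φ (n : ZMod k) / (n:ℝ) ^ 2
        ≤ ∑ n ∈ Ioc ℓ (k / 2), ((5 / (4 * ((ℓ - ℓ / 2 : ℕ) : ℝ))) * ∑ h' ∈ Icc (ℓ / 2 + 1) ℓ, H h'
            + 5 * (3 * (ℓ:ℝ) - 2) * SV / (n:ℝ) ^ 2) := Finset.sum_le_sum hlongn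
      _ = ((Ioc ℓ (k / 2)).card : ℝ) * ((5 / (4 * ((ℓ - ℓ / 2 : ℕ) : ℝ))) * ∑ h' ∈ Icc (ℓ / 2 + 1) ℓ, H h')
            + 5 * (3 * (ℓ:ℝ) - 2) * SV * ∑ n ∈ Ioc ℓ (k / 2), 1 / (n:ℝ) ^ 2 := by
          rw [Finset.sum_add_distrib, Finset.sum_const, nsmul_eq_mul]
          congr 1
          simp only [div_eq_mul_inv, one_mul, ← Finset.mul_sum]
      _ ≤ (3 * (c:ℝ) - 3) * SH + 15 * SV := by
          have ht := tail_inv_sq ℓ (by omega) (k / 2)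
          have h2r : (2:ℝ) ≤ (ℓ:ℝ) := by exact_mod_cast hℓ
          have htnn : 0 ≤ ∑ n ∈ Ioc ℓ (k / 2), 1 / (n:ℝ) ^ 2 :=
            Finset.sum_nonneg fun n _ => by positivity
          have hB : 0 ≤ 5 * (3 * (ℓ:ℝ) - 2) * SV := by nlinarith
          have hterm2 : 5 * (3 * (ℓ:ℝ) - 2) * SV * ∑ n ∈ Ioc ℓ (k / 2), 1 / (n:ℝ) ^ 2
              ≤ 5 * (3 * (ℓ:ℝ) - 2) * SV * (1 / (ℓ:ℝ)) := mul_le_mul_of_nonneg_left ht hB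
          have hℓpos : (0:ℝ) < (ℓ:ℝ) := by linarith
          have hterm2b : 5 * (3 * (ℓ:ℝ) - 2) * SV * (1 / (ℓ:ℝ)) ≤ 15 * SV := by
            rw [mul_one_div, div_le_iff₀ hℓpos]
            nlinarith
          have hterm1 : ((Ioc ℓ (k / 2)).card : ℝ)
                * ((5 / (4 * ((ℓ - ℓ / 2 : ℕ) : ℝ))) * ∑ h' ∈ Icc (ℓ / 2 + 1) ℓ, H h')
              ≤ (3 * (c:ℝ) - 3) * SH := by
            have hc1 : ((Ioc ℓ (k / 2)).card : ℝ)
                  * ((5 / (4 * ((ℓ - ℓ / 2 : ℕ) : ℝ))) * ∑ h' ∈ Icc (ℓ / 2 + 1) ℓ, H h')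
                = (((Ioc ℓ (k / 2)).card : ℝ) * (5 / (4 * ((ℓ - ℓ / 2 : ℕ) : ℝ))))
                  * ∑ h' ∈ Icc (ℓ / 2 + 1) ℓ, H h' := by ring
            rw [hc1]
            have hcnn : (0:ℝ) ≤ ((Ioc ℓ (k / 2)).card : ℝ) * (5 / (4 * ((ℓ - ℓ / 2 : ℕ) : ℝ))) := by
              positivity
            calc _ ≤ (((Ioc ℓ (k / 2)).card : ℝ) * (5 / (4 * ((ℓ - ℓ / 2 : ℕ) : ℝ)))) * SH :=
                  mul_le_mul_of_nonneg_left hWsub hcnn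
              _ ≤ (3 * (c:ℝ) - 3) * SH := mul_le_mul_of_nonneg_right hcoef hSHnn
          linarith
  -- final combination
  have hsplit := Finset.sum_Ioc_consecutive (fun n => Fsq k φ (n : ZMod k) / (n:ℝ) ^ 2)
    (Nat.zero_le ℓ) hℓ2
  have hM1 : 3 * (c:ℝ) ≤ max (3 * (c : ℝ)) (4 * Real.pi ^ 2) := le_max_left _ _
  have hM2 : (39:ℝ) ≤ max (3 * (c : ℝ)) (4 * Real.pi ^ 2) := by
    have hpi : (3.141592 : ℝ) < Real.pi := Real.pi_gt_d6
    have : (39:ℝ) ≤ 4 * Real.pi ^ 2 := by nlinarith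
    exact le_trans this (le_max_right _ _)
  calc bSemiSq k φ ≤ ∑ n ∈ Ioc 0 (k / 2), Fsq k φ (n : ZMod k) / (n:ℝ) ^ 2 :=
        bSemiSq_le_sum φ
    _ = (∑ n ∈ Ioc 0 ℓ, Fsq k φ (n : ZMod k) / (n:ℝ) ^ 2)
        + ∑ n ∈ Ioc ℓ (k / 2), Fsq k φ (n : ZMod k) / (n:ℝ) ^ 2 := hsplit.symm
    _ ≤ (3 * SH + 24 * SV) + ((3 * (c:ℝ) - 3) * SH + 15 * SV) :=
        add_le_add hshortsum hlongsum
    _ = (3 * (c:ℝ)) * SH + 39 * SV := by ring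
    _ ≤ max (3 * (c : ℝ)) (4 * Real.pi ^ 2) * SH
        + max (3 * (c : ℝ)) (4 * Real.pi ^ 2) * SV := by
        have g1 : (3 * (c:ℝ)) * SH ≤ max (3 * (c : ℝ)) (4 * Real.pi ^ 2) * SH :=
          mul_le_mul_of_nonneg_right hM1 hSHnn
        have g2 : 39 * SV ≤ max (3 * (c : ℝ)) (4 * Real.pi ^ 2) * SV :=
          mul_le_mul_of_nonneg_right hM2 hSVnn
        linarith
    _ = max (3 * (c : ℝ)) (4 * Real.pi ^ 2) * (SH + SV) := by ring

def extFn (k : ℕ) [NeZero k] (φ : ZMod k → ℝ) : ZMod k → ℕ → ℝ :=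
  fun i j => if j = 0 then φ i else (∑ t ∈ range j, φ (i + (t : ZMod k))) / j

lemma extFn_one (φ : ZMod k → ℝ) (i : ZMod k) : extFn k φ i 1 = φ i := by
  simp [extFn]

lemma hor_id (φ : ZMod k → ℝ) (j : ℕ) (hj : 1 ≤ j) (i : ZMod k) :
    extFn k φ (i + 1) j - extFn k φ i j = (φ (i + (j : ZMod k)) - φ i) / j := by
  have hj0 : j ≠ 0 := by omega
  simp only [extFn, if_neg hj0]
  have e1 : ∑ t ∈ range j, φ (i + 1 + (t : ZMod k))
      = ∑ t ∈ range j, φ (i + ((t + 1 : ℕ) : ZMod k)) := by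
    apply Finset.sum_congr rfl
    intro t _
    congr 1
    push_cast
    ring
  have h2 := Finset.sum_range_succ' (fun t : ℕ => φ (i + (t : ZMod k))) j
  have h3 := Finset.sum_range_succ (fun t : ℕ => φ (i + (t : ZMod k))) j
  have e2 : ∑ t ∈ range j, φ (i + ((t + 1 : ℕ) : ZMod k))
      = (∑ t ∈ range j, φ (i + (t : ZMod k))) + φ (i + (j : ZMod k))
        - φ (i + ((0 : ℕ) : ZMod k)) := by
    linarith [h2, h3]
  rw [e1, e2]
  simp only [Nat.cast_zero, add_zero]
  ring

lemma hor_sum (φ : ZMod k → ℝ) (j : ℕ) (hj : 1 ≤ j) :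
    ∑ i : ZMod k, (extFn k φ (i + 1) j - extFn k φ i j) ^ 2
      = Fsq k φ (j : ZMod k) / (j : ℝ) ^ 2 := by
  rw [Fsq, Finset.sum_div]
  apply Finset.sum_congr rfl
  intro i _
  rw [hor_id φ j hj i, div_pow]

lemma ver_id (φ : ZMod k → ℝ) (j : ℕ) (hj : 1 ≤ j) (i : ZMod k) :
    extFn k φ i (j + 1) - extFn k φ i j
      = (∑ t ∈ range j, (φ (i + (j : ZMod k)) - φ (i + (t : ZMod k))))
        / ((j : ℝ) * ((j : ℝ) + 1)) := by
  have hj0 : j ≠ 0 := by omega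
  have hj10 : j + 1 ≠ 0 := by omega
  simp only [extFn, if_neg hj0, if_neg hj10]
  rw [Finset.sum_range_succ, Finset.sum_sub_distrib, Finset.sum_const, Finset.card_range,
    nsmul_eq_mul]
  have hjr : (0:ℝ) < (j:ℝ) := by exact_mod_cast hj
  push_cast
  field_simp
  ring

lemma ver_sum (φ : ZMod k → ℝ) (j : ℕ) (hj : 1 ≤ j) :
    ∑ i : ZMod k, (extFn k φ i (j + 1) - extFn k φ i j) ^ 2
      ≤ (∑ t ∈ range j, Fsq k φ (((t + 1 : ℕ)) : ZMod k))
        / ((j : ℝ) * ((j : ℝ) + 1) ^ 2) := by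
  have hjr : (0:ℝ) < (j:ℝ) := by exact_mod_cast hj
  have step : ∀ i : ZMod k, (extFn k φ i (j + 1) - extFn k φ i j) ^ 2
      ≤ (∑ t ∈ range j, (φ (i + (j : ZMod k)) - φ (i + (t : ZMod k))) ^ 2)
        / ((j : ℝ) * ((j : ℝ) + 1) ^ 2) := by
    intro i
    rw [ver_id φ j hj i, div_pow]
    have hCS : (∑ t ∈ range j, (φ (i + (j : ZMod k)) - φ (i + (t : ZMod k)))) ^ 2
        ≤ (j:ℝ) * ∑ t ∈ range j, (φ (i + (j : ZMod k)) - φ (i + (t : ZMod k))) ^ 2 := by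
      calc _ ≤ ((range j).card : ℝ) * ∑ t ∈ range j,
            (φ (i + (j : ZMod k)) - φ (i + (t : ZMod k))) ^ 2 := sq_sum_le_card_mul_sum_sq
        _ = _ := by rw [Finset.card_range]
    calc (∑ t ∈ range j, (φ (i + (j : ZMod k)) - φ (i + (t : ZMod k)))) ^ 2
          / ((j : ℝ) * ((j : ℝ) + 1)) ^ 2
        ≤ ((j:ℝ) * ∑ t ∈ range j, (φ (i + (j : ZMod k)) - φ (i + (t : ZMod k))) ^ 2)
          / ((j : ℝ) * ((j : ℝ) + 1)) ^ 2 :=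
          div_le_div_of_nonneg_right hCS (by positivity)
      _ = (∑ t ∈ range j, (φ (i + (j : ZMod k)) - φ (i + (t : ZMod k))) ^ 2)
          / ((j : ℝ) * ((j : ℝ) + 1) ^ 2) := by
          field_simp
  have e1 : ∀ t ∈ range j, ∑ i : ZMod k, (φ (i + (j : ZMod k)) - φ (i + (t : ZMod k))) ^ 2
      = Fsq k φ (((j - t : ℕ)) : ZMod k) := by
    intro t ht
    rw [Finset.mem_range] at ht
    have ecast : (t : ZMod k) + ((j - t : ℕ) : ZMod k) = (j : ZMod k) := by
      rw [← Nat.cast_add]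
      congr 1
      omega
    rw [Fsq, ← sum_shift (fun p => (φ (p + ((j - t : ℕ) : ZMod k)) - φ p) ^ 2) ((t : ZMod k))]
    apply Finset.sum_congr rfl
    intro i _
    have e : i + (t : ZMod k) + ((j - t : ℕ) : ZMod k) = i + (j : ZMod k) := by
      rw [add_assoc, ecast]
    rw [e]
  have e2 : ∑ t ∈ range j, Fsq k φ (((j - t : ℕ)) : ZMod k)
      = ∑ t ∈ range j, Fsq k φ (((t + 1 : ℕ)) : ZMod k) := by
    rw [← Finset.sum_range_reflect (fun t => Fsq k φ (((t + 1 : ℕ)) : ZMod k)) j]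
    apply Finset.sum_congr rfl
    intro t ht
    rw [Finset.mem_range] at ht
    congr 2
    omega
  calc ∑ i : ZMod k, (extFn k φ i (j + 1) - extFn k φ i j) ^ 2
      ≤ ∑ i : ZMod k, (∑ t ∈ range j, (φ (i + (j : ZMod k)) - φ (i + (t : ZMod k))) ^ 2)
        / ((j : ℝ) * ((j : ℝ) + 1) ^ 2) := Finset.sum_le_sum fun i _ => step i
    _ = (∑ i : ZMod k, ∑ t ∈ range j, (φ (i + (j : ZMod k)) - φ (i + (t : ZMod k))) ^ 2)
        / ((j : ℝ) * ((j : ℝ) + 1) ^ 2) := by rw [Finset.sum_div]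
    _ = (∑ t ∈ range j, Fsq k φ (((j - t : ℕ)) : ZMod k)) / ((j : ℝ) * ((j : ℝ) + 1) ^ 2) := by
        rw [Finset.sum_comm, Finset.sum_congr rfl e1]
    _ = _ := by rw [e2]

lemma ver_total (φ : ZMod k → ℝ) (L : ℕ) :
    ∑ j ∈ Icc 1 L, ∑ i : ZMod k, (extFn k φ i (j + 1) - extFn k φ i j) ^ 2
      ≤ ∑ n ∈ Ioc 0 L, Fsq k φ (n : ZMod k) / (n : ℝ) ^ 2 := by
  have step1 : ∑ j ∈ Icc 1 L, ∑ i : ZMod k, (extFn k φ i (j + 1) - extFn k φ i j) ^ 2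
      ≤ ∑ j ∈ Icc 1 L, ∑ t ∈ range j,
          Fsq k φ (((t + 1 : ℕ)) : ZMod k) / ((j : ℝ) * ((j : ℝ) + 1) ^ 2) := by
    apply Finset.sum_le_sum
    intro j hj
    have hj1 : 1 ≤ j := (Finset.mem_Icc.mp hj).1
    calc ∑ i : ZMod k, (extFn k φ i (j + 1) - extFn k φ i j) ^ 2
        ≤ (∑ t ∈ range j, Fsq k φ (((t + 1 : ℕ)) : ZMod k))
          / ((j : ℝ) * ((j : ℝ) + 1) ^ 2) := ver_sum φ j hj1
      _ = _ := Finset.sum_div _ _ _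
  have step2 := tri_swap L (fun j t => Fsq k φ (((t + 1 : ℕ)) : ZMod k)
    / ((j : ℝ) * ((j : ℝ) + 1) ^ 2))
  have step3 : ∑ t ∈ range L, ∑ j ∈ Icc (t + 1) L,
      Fsq k φ (((t + 1 : ℕ)) : ZMod k) / ((j : ℝ) * ((j : ℝ) + 1) ^ 2)
      ≤ ∑ t ∈ range L, Fsq k φ (((t + 1 : ℕ)) : ZMod k) / (((t + 1 : ℕ)) : ℝ) ^ 2 := by
    apply Finset.sum_le_sum
    intro t _
    have hF := Fsq_nonneg φ (((t + 1 : ℕ)) : ZMod k)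
    have e1 : ∑ j ∈ Icc (t + 1) L,
        Fsq k φ (((t + 1 : ℕ)) : ZMod k) / ((j : ℝ) * ((j : ℝ) + 1) ^ 2)
        = Fsq k φ (((t + 1 : ℕ)) : ZMod k)
          * ∑ j ∈ Icc (t + 1) L, 1 / ((j : ℝ) * ((j : ℝ) + 1) ^ 2) := by
      rw [Finset.mul_sum]
      apply Finset.sum_congr rfl
      intro j _
      ring
    rw [e1]
    have htail := tail_telescope (t + 1) (by omega) L
    have hcast : (((t + 1 : ℕ)) : ℝ) = (t : ℝ) + 1 := by push_cast; ring
    have h2 : (1:ℝ) / (((t:ℝ) + 1) * (((t:ℝ) + 1) + 1)) ≤ 1 / (((t + 1 : ℕ)) : ℝ) ^ 2 := by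
      rw [hcast]
      apply div_le_div_of_nonneg_left one_pos.le (by positivity)
      nlinarith [Nat.cast_nonneg (α := ℝ) t]
    have htail2 : ∑ j ∈ Icc (t + 1) L, 1 / ((j : ℝ) * ((j : ℝ) + 1) ^ 2)
        ≤ 1 / (((t + 1 : ℕ)) : ℝ) ^ 2 := by
      calc ∑ j ∈ Icc (t + 1) L, 1 / ((j : ℝ) * ((j : ℝ) + 1) ^ 2)
          ≤ 1 / ((((t + 1 : ℕ)) : ℝ) * ((((t + 1 : ℕ)) : ℝ) + 1)) := htail
        _ = 1 / (((t:ℝ) + 1) * (((t:ℝ) + 1) + 1)) := by rw [hcast]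
        _ ≤ 1 / (((t + 1 : ℕ)) : ℝ) ^ 2 := h2
    calc Fsq k φ (((t + 1 : ℕ)) : ZMod k)
          * ∑ j ∈ Icc (t + 1) L, 1 / ((j : ℝ) * ((j : ℝ) + 1) ^ 2)
        ≤ Fsq k φ (((t + 1 : ℕ)) : ZMod k) * (1 / (((t + 1 : ℕ)) : ℝ) ^ 2) :=
          mul_le_mul_of_nonneg_left htail2 hF
      _ = Fsq k φ (((t + 1 : ℕ)) : ZMod k) / (((t + 1 : ℕ)) : ℝ) ^ 2 := by ring
  have step4 := range_shift (fun n => Fsq k φ ((n : ℕ) : ZMod k) / ((n : ℕ) : ℝ) ^ 2) L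
  calc ∑ j ∈ Icc 1 L, ∑ i : ZMod k, (extFn k φ i (j + 1) - extFn k φ i j) ^ 2
      ≤ ∑ j ∈ Icc 1 L, ∑ t ∈ range j,
          Fsq k φ (((t + 1 : ℕ)) : ZMod k) / ((j : ℝ) * ((j : ℝ) + 1) ^ 2) := step1
    _ = ∑ t ∈ range L, ∑ j ∈ Icc (t + 1) L,
          Fsq k φ (((t + 1 : ℕ)) : ZMod k) / ((j : ℝ) * ((j : ℝ) + 1) ^ 2) := step2
    _ ≤ ∑ t ∈ range L, Fsq k φ (((t + 1 : ℕ)) : ZMod k) / (((t + 1 : ℕ)) : ℝ) ^ 2 := step3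
    _ = ∑ n ∈ Ioc 0 L, Fsq k φ (n : ZMod k) / (n : ℝ) ^ 2 := step4

lemma bSemiSq_nonneg (φ : ZMod k → ℝ) : 0 ≤ bSemiSq k φ := by
  rw [bSemiSq_eq]
  apply mul_nonneg (by norm_num)
  apply Finset.sum_nonneg
  intro s _
  split
  · exact div_nonneg (Fsq_nonneg _ _) (sq_nonneg _)
  · exact le_rfl

lemma part_two (ℓ c : ℕ) (h1 : 4 * ℓ < k) (h2 : k < 2 * c * ℓ) (hℓ : 2 ≤ ℓ)
    (s1 s2 : ZMod k → ℕ → Bool) (φ : ZMod k → ℝ) :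
    energySqH k ℓ s1 s2 (extFn k φ) ≤ (4 * (c : ℝ) + 475 / 9) * bSemiSq k φ := by
  set u := extFn k φ with hu
  set S : ℕ → ℝ := fun L => ∑ n ∈ Ioc 0 L, Fsq k φ (n : ZMod k) / (n : ℝ) ^ 2 with hS
  have hSnnt : ∀ L, 0 ≤ S L := fun L =>
    Finset.sum_nonneg fun n _ => div_nonneg (Fsq_nonneg _ _) (sq_nonneg _)
  have hSmono : S (ℓ - 1) ≤ S ℓ := by
    apply Finset.sum_le_sum_of_subset_of_nonneg
    · exact Finset.Ioc_subset_Ioc le_rfl (by omega)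
    · intro n _ _; exact div_nonneg (Fsq_nonneg _ _) (sq_nonneg _)
  -- horizontal total
  have hhor : ∑ i : ZMod k, ∑ j ∈ Icc 1 ℓ, (u (i + 1) j - u i j) ^ 2 = S ℓ := by
    rw [Finset.sum_comm]
    show _ = ∑ n ∈ Ioc 0 ℓ, Fsq k φ (n : ZMod k) / (n : ℝ) ^ 2
    rw [← Finset.Icc_add_one_left_eq_Ioc]
    exact Finset.sum_congr rfl fun j hj => hor_sum φ j (Finset.mem_Icc.mp hj).1
  have hhor' : ∑ j ∈ Icc 1 (ℓ - 1), ∑ i : ZMod k, (u (i + 1) j - u i j) ^ 2 = S (ℓ - 1) := by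
    show _ = ∑ n ∈ Ioc 0 (ℓ - 1), Fsq k φ (n : ZMod k) / (n : ℝ) ^ 2
    rw [← Finset.Icc_add_one_left_eq_Ioc]
    exact Finset.sum_congr rfl fun j hj => hor_sum φ j (Finset.mem_Icc.mp hj).1
  have hver : ∑ i : ZMod k, ∑ j ∈ Icc 1 (ℓ - 1), (u i (j + 1) - u i j) ^ 2 ≤ S (ℓ - 1) := by
    rw [Finset.sum_comm]
    exact ver_total φ (ℓ - 1)
  have hver' : ∑ j ∈ Icc 1 (ℓ - 1), ∑ i : ZMod k, (u i (j + 1) - u i j) ^ 2 ≤ S (ℓ - 1) :=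
    ver_total φ (ℓ - 1)
  -- diagonal part
  have hdiag : ∑ i : ZMod k, ∑ j ∈ Icc 1 (ℓ - 1),
      ((if s1 i j then (u i (j + 1) - u (i - 1) j) ^ 2 else 0)
        + (if s2 i j then (u i (j + 1) - u (i + 1) j) ^ 2 else 0))
      ≤ 8 * S (ℓ - 1) := by
    have drop : ∀ i : ZMod k, ∀ j, ((if s1 i j then (u i (j + 1) - u (i - 1) j) ^ 2 else 0)
        + (if s2 i j then (u i (j + 1) - u (i + 1) j) ^ 2 else 0))
        ≤ (u i (j + 1) - u (i - 1) j) ^ 2 + (u i (j + 1) - u (i + 1) j) ^ 2 := by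
      intro i j
      have a1 : (if s1 i j then (u i (j + 1) - u (i - 1) j) ^ 2 else 0)
          ≤ (u i (j + 1) - u (i - 1) j) ^ 2 := by
        split
        · exact le_rfl
        · exact sq_nonneg _
      have a2 : (if s2 i j then (u i (j + 1) - u (i + 1) j) ^ 2 else 0)
          ≤ (u i (j + 1) - u (i + 1) j) ^ 2 := by
        split
        · exact le_rfl
        · exact sq_nonneg _
      linarith
    have perj : ∀ j ∈ Icc 1 (ℓ - 1), ∑ i : ZMod k,
        ((u i (j + 1) - u (i - 1) j) ^ 2 + (u i (j + 1) - u (i + 1) j) ^ 2)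
        ≤ 4 * (∑ i : ZMod k, (u i (j + 1) - u i j) ^ 2)
          + 4 * (∑ i : ZMod k, (u (i + 1) j - u i j) ^ 2) := by
      intro j hj
      have point : ∀ i : ZMod k,
          (u i (j + 1) - u (i - 1) j) ^ 2 + (u i (j + 1) - u (i + 1) j) ^ 2
          ≤ 2 * (u i (j + 1) - u i j) ^ 2 + 2 * (u i j - u (i - 1) j) ^ 2
            + (2 * (u i (j + 1) - u i j) ^ 2 + 2 * (u i j - u (i + 1) j) ^ 2) := by
        intro i
        nlinarith [sq_nonneg ((u i (j + 1) - u i j) - (u i j - u (i - 1) j)),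
          sq_nonneg ((u i (j + 1) - u i j) - (u i j - u (i + 1) j))]
      have eH1 : ∑ i : ZMod k, (u i j - u (i - 1) j) ^ 2
          = ∑ i : ZMod k, (u (i + 1) j - u i j) ^ 2 := by
        rw [← sum_shift (fun p => (u (p + 1) j - u p j) ^ 2) (-1)]
        apply Finset.sum_congr rfl
        intro i _
        have e2 : i + -1 = i - 1 := by ring
        have e3 : i - 1 + 1 = i := by ring
        simp only [e2, e3]
      have eH2 : ∑ i : ZMod k, (u i j - u (i + 1) j) ^ 2
          = ∑ i : ZMod k, (u (i + 1) j - u i j) ^ 2 := by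
        apply Finset.sum_congr rfl
        intro i _
        ring
      calc ∑ i : ZMod k, ((u i (j + 1) - u (i - 1) j) ^ 2 + (u i (j + 1) - u (i + 1) j) ^ 2)
          ≤ ∑ i : ZMod k, (2 * (u i (j + 1) - u i j) ^ 2 + 2 * (u i j - u (i - 1) j) ^ 2
            + (2 * (u i (j + 1) - u i j) ^ 2 + 2 * (u i j - u (i + 1) j) ^ 2)) :=
            Finset.sum_le_sum fun i _ => point i
        _ = 4 * (∑ i : ZMod k, (u i (j + 1) - u i j) ^ 2)
            + 2 * (∑ i : ZMod k, (u i j - u (i - 1) j) ^ 2)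
            + 2 * (∑ i : ZMod k, (u i j - u (i + 1) j) ^ 2) := by
            rw [Finset.sum_add_distrib, Finset.sum_add_distrib, Finset.sum_add_distrib]
            simp only [← Finset.mul_sum]
            ring
        _ = _ := by rw [eH1, eH2]; ring
    calc ∑ i : ZMod k, ∑ j ∈ Icc 1 (ℓ - 1),
        ((if s1 i j then (u i (j + 1) - u (i - 1) j) ^ 2 else 0)
          + (if s2 i j then (u i (j + 1) - u (i + 1) j) ^ 2 else 0))
        ≤ ∑ i : ZMod k, ∑ j ∈ Icc 1 (ℓ - 1),
          ((u i (j + 1) - u (i - 1) j) ^ 2 + (u i (j + 1) - u (i + 1) j) ^ 2) :=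
          Finset.sum_le_sum fun i _ => Finset.sum_le_sum fun j _ => drop i j
      _ = ∑ j ∈ Icc 1 (ℓ - 1), ∑ i : ZMod k,
          ((u i (j + 1) - u (i - 1) j) ^ 2 + (u i (j + 1) - u (i + 1) j) ^ 2) :=
          Finset.sum_comm
      _ ≤ ∑ j ∈ Icc 1 (ℓ - 1), (4 * (∑ i : ZMod k, (u i (j + 1) - u i j) ^ 2)
          + 4 * (∑ i : ZMod k, (u (i + 1) j - u i j) ^ 2)) :=
          Finset.sum_le_sum perj
      _ = 4 * (∑ j ∈ Icc 1 (ℓ - 1), ∑ i : ZMod k, (u i (j + 1) - u i j) ^ 2)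
          + 4 * (∑ j ∈ Icc 1 (ℓ - 1), ∑ i : ZMod k, (u (i + 1) j - u i j) ^ 2) := by
          rw [Finset.sum_add_distrib]
          simp only [← Finset.mul_sum]
      _ ≤ 4 * S (ℓ - 1) + 4 * S (ℓ - 1) := by
          have g1 := hver'
          have g2 : ∑ j ∈ Icc 1 (ℓ - 1), ∑ i : ZMod k, (u (i + 1) j - u i j) ^ 2 = S (ℓ - 1) :=
            hhor'
          linarith
      _ = 8 * S (ℓ - 1) := by ring
  -- combine
  have hkl : 2 * ℓ < k := by omega
  have hfinal : energySqH k ℓ s1 s2 u ≤ 10 * S ℓ := by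
    unfold energySqH energySq
    have := hhor
    linarith [hhor, hver, hdiag, hSmono]
  have hb := sum_le_bSemiSq φ ℓ hkl
  have hbnn := bSemiSq_nonneg φ
  have hc0 : (0:ℝ) ≤ (c:ℝ) := Nat.cast_nonneg c
  calc energySqH k ℓ s1 s2 u ≤ 10 * S ℓ := hfinal
    _ ≤ 10 * bSemiSq k φ := by linarith [hb]
    _ ≤ (4 * (c : ℝ) + 475 / 9) * bSemiSq k φ := by nlinarith [hbnn, hc0]

end DTT

/-- Discrete trace theorem for graphs between `G_{k,ℓ}` and `G*_{k,ℓ}`: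
assume `ℓ ≥ 2`, and let `H` be any graph with `G_{k,ℓ} ⊆ H ⊆ G*_{k,ℓ}` (given by an
arbitrary fixed subset, encoded by `s1, s2`, of the diagonal edges of `G*_{k,ℓ}`).
Then for every `φ : ℤ/kℤ → ℝ`:
(i) every `u` with `u(i,1) = φ(i)` for all `i` satisfies `|φ|_Γ² ≤ max{3c, 4π²} · |u|_H²`;
(ii) there exists `u` with `u(i,1) = φ(i)` for all `i` and `|u|_H² ≤ (4c + 475/9)·|φ|_Γ²`. -/
theorem discrete_trace_theorem_between (k ℓ c : ℕ) [NeZero k]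
    (h1 : 4 * ℓ < k) (h2 : k < 2 * c * ℓ) (hℓ : 2 ≤ ℓ)
    (s1 s2 : ZMod k → ℕ → Bool)
    (φ : ZMod k → ℝ) :
    (∀ u : ZMod k → ℕ → ℝ, (∀ i : ZMod k, u i 1 = φ i) →
      bSemiSq k φ ≤ max (3 * (c : ℝ)) (4 * π ^ 2) * energySqH k ℓ s1 s2 u) ∧
    (∃ u : ZMod k → ℕ → ℝ, (∀ i : ZMod k, u i 1 = φ i) ∧
      energySqH k ℓ s1 s2 u ≤ (4 * (c : ℝ) + 475 / 9) * bSemiSq k φ) := by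
  constructor
  · intro u hu
    have hp1 := DTT.part_one ℓ c h1 h2 hℓ φ u hu
    have hM0 : (0:ℝ) ≤ max (3 * (c : ℝ)) (4 * π ^ 2) :=
      le_trans (by positivity) (le_max_left _ _)
    have hE : (∑ j ∈ Finset.Icc 1 ℓ, ∑ i : ZMod k, (u (i + 1) j - u i j) ^ 2)
        + ∑ j ∈ Finset.Icc 1 (ℓ - 1), ∑ i : ZMod k, (u i (j + 1) - u i j) ^ 2
        = energySq k ℓ u := by
      unfold energySq
      congr 1
      · exact Finset.sum_comm
      · exact Finset.sum_comm
    have hdnn : 0 ≤ ∑ i : ZMod k, ∑ j ∈ Finset.Icc 1 (ℓ - 1),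
        ((if s1 i j then (u i (j + 1) - u (i - 1) j) ^ 2 else 0)
          + (if s2 i j then (u i (j + 1) - u (i + 1) j) ^ 2 else 0)) := by
      apply Finset.sum_nonneg
      intro i _
      apply Finset.sum_nonneg
      intro j _
      have a1 : (0:ℝ) ≤ if s1 i j then (u i (j + 1) - u (i - 1) j) ^ 2 else 0 := by
        split
        · exact sq_nonneg _
        · exact le_rfl
      have a2 : (0:ℝ) ≤ if s2 i j then (u i (j + 1) - u (i + 1) j) ^ 2 else 0 := by
        split
        · exact sq_nonneg _
        · exact le_rfl
      linarith
    calc bSemiSq k φ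
        ≤ max (3 * (c : ℝ)) (4 * π ^ 2) *
          ((∑ j ∈ Finset.Icc 1 ℓ, ∑ i : ZMod k, (u (i + 1) j - u i j) ^ 2)
            + ∑ j ∈ Finset.Icc 1 (ℓ - 1), ∑ i : ZMod k, (u i (j + 1) - u i j) ^ 2) := hp1
      _ = max (3 * (c : ℝ)) (4 * π ^ 2) * energySq k ℓ u := by rw [hE]
      _ ≤ max (3 * (c : ℝ)) (4 * π ^ 2) * energySqH k ℓ s1 s2 u := by
          apply mul_le_mul_of_nonneg_left _ hM0
          unfold energySqH
          linarith
  · exact ⟨DTT.extFn k φ, fun i => DTT.extFn_one φ i,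
      DTT.part_two ℓ c h1 h2 hℓ s1 s2 φ⟩
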